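/- Let r, n ∈ ℕ with n ≥ 1 and F(r) ≤ n. Then (r : ℝ) ≤ 1.45 · log₂(n) + 2. -/

import Mathlib

open Real

lemma gold_pow_le_fib : ∀ m : ℕ, goldenRatio ^ m ≤ (Nat.fib (m + 2) : ℝ) := by
  intro m
  induction m using Nat.twoStepInduction with
  | zero => norm_num
  | one => simpa [show Nat.fib 3 = 2 from rfl] using goldenRatio_lt_two.le
  | more m ih1 ih2 =>
    have h : goldenRatio ^ (m + 2) = goldenRatio ^ (m + 1) + goldenRatio ^ m := by
      have := goldenRatio_pow_sub_goldenRatio_pow m; linarith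
    rw [h, Nat.fib_add_two]
    push_cast
    linarith

lemma gold_lb : (1.6 : ℝ) ≤ goldenRatio := by
  have h5 : (2.2 : ℝ) ≤ Real.sqrt 5 := by
    rw [show (2.2:ℝ) = Real.sqrt (2.2^2) by rw [Real.sqrt_sq]; norm_num]
    apply Real.sqrt_le_sqrt; norm_num
  rw [goldenRatio]; linarith

lemma logb_gold : (1 : ℝ) / 1.45 ≤ Real.logb 2 goldenRatio := by
  have hpow : (2 : ℝ) ^ (20 : ℕ) ≤ goldenRatio ^ (29 : ℕ) := by
    have h : goldenRatio ^ (28 + 1) = goldenRatio * (Nat.fib 29 : ℝ) + (Nat.fib 28 : ℝ) :=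
      (goldenRatio_mul_fib_succ_add_fib 28).symm
    have h29 : (Nat.fib 29 : ℝ) = 514229 := by norm_num [Nat.fib]
    have h28 : (Nat.fib 28 : ℝ) = 317811 := by norm_num [Nat.fib]
    have := gold_lb
    rw [show (29 : ℕ) = 28 + 1 from rfl, h, h29, h28]
    norm_num; linarith
  have hlog : (20 : ℝ) * Real.log 2 ≤ 29 * Real.log goldenRatio := by
    have := Real.log_le_log (by positivity) hpow
    rwa [Real.log_pow, Real.log_pow] at this
  have hl2 : (0 : ℝ) < Real.log 2 := Real.log_pos (by norm_num)
  rw [Real.logb, div_le_div_iff₀ (by norm_num) hl2]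
  linarith

theorem stmt_3 (r n : ℕ) (hn : 1 ≤ n) (h : Nat.fib r ≤ n) :
    (r : ℝ) ≤ 1.45 * Real.logb 2 n + 2 := by
  have hlogn : (0 : ℝ) ≤ Real.logb 2 n := by
    apply Real.logb_nonneg (by norm_num)
    exact_mod_cast hn
  rcases le_or_gt r 2 with hr | hr
  · have : (r : ℝ) ≤ 2 := by exact_mod_cast hr
    linarith
  · obtain ⟨m, rfl⟩ : ∃ m, r = m + 2 := ⟨r - 2, by omega⟩
    have h1 : goldenRatio ^ m ≤ (n : ℝ) := by
      calc goldenRatio ^ m ≤ (Nat.fib (m + 2) : ℝ) := gold_pow_le_fib m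
        _ ≤ (n : ℝ) := by exact_mod_cast h
    have h2 : (m : ℝ) * Real.logb 2 goldenRatio ≤ Real.logb 2 n := by
      have := Real.logb_le_logb_of_le (by norm_num : (1:ℝ) < 2) (pow_pos goldenRatio_pos m) h1
      rwa [Real.logb_pow] at this
    have h3 : (m : ℝ) * (1 / 1.45) ≤ (m : ℝ) * Real.logb 2 goldenRatio :=
      mul_le_mul_of_nonneg_left logb_gold (Nat.cast_nonneg m)
    have hm : (m : ℝ) ≤ 1.45 * Real.logb 2 n := by
      have := h3.trans h2
      nlinarith
    push_cast
    linarith
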